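/- arXiv:1312.5793 — 2 statements merged into one kernel-verified Lean document; each statement's English description precedes it below -/
import Mathlib

section
/- Let c ∈ ℝ \ {0} and let q(x) = c·x² on ℝ. Every Schwartz function φ : ℝ → ℂ admits a fiber density φ̃ along q, and φ̃ belongs to L²(ℝ) (with respect to Lebesgue measure) if and only if φ(0) = 0. -/
open MeasureTheory Set

/-- `ft` is a fiber density of `f` along the map `q : ℝ → ℝ` (w.r.t. Lebesgue measure). -/
def IsFiberDensity1 (q : ℝ → ℝ) (f : ℝ → ℂ) (ft : ℝ → ℂ) : Prop :=
  Measurable ft ∧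
    ∀ g : ℝ → ℂ, Measurable g → (∃ C : ℝ, ∀ r : ℝ, ‖g r‖ ≤ C) →
      ∫ x : ℝ, f x * g (q x) = ∫ r : ℝ, ft r * g r

namespace FiberAux


noncomputable def tfd (c : ℝ) (φ : SchwartzMap ℝ ℂ) (r : ℝ) : ℂ :=
  if 0 < r / c then (φ (Real.sqrt (r / c)) + φ (-Real.sqrt (r / c))) /
    ((2 * |c| * Real.sqrt (r / c) : ℝ) : ℂ) else 0

lemma measS (c : ℝ) : MeasurableSet {r : ℝ | 0 < r / c} :=
  measurableSet_lt measurable_const (measurable_id.div_const c)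

lemma measurable_tfd (c : ℝ) (φ : SchwartzMap ℝ ℂ) : Measurable (tfd c φ) := by
  unfold tfd
  refine Measurable.ite (measS c) ?_ measurable_const
  have hs : Measurable fun r : ℝ => Real.sqrt (r / c) :=
    Real.continuous_sqrt.measurable.comp (measurable_id.div_const c)
  exact ((φ.continuous.measurable.comp hs).add
    (φ.continuous.measurable.comp hs.neg)).div
    (Complex.measurable_ofReal.comp (hs.const_mul (2 * |c|)))

lemma image_eq {c : ℝ} (hc : c ≠ 0) :
    (fun x : ℝ => c * x ^ 2) '' Ioi 0 = {r : ℝ | 0 < r / c} := by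
  ext r
  constructor
  · rintro ⟨x, hx, rfl⟩
    have h1 : c * x ^ 2 / c = x ^ 2 := by field_simp
    show 0 < c * x ^ 2 / c
    rw [h1]; exact pow_pos hx 2
  · intro hr
    have hr' : 0 < r / c := hr
    refine ⟨Real.sqrt (r / c), Real.sqrt_pos.2 hr', ?_⟩
    show c * Real.sqrt (r / c) ^ 2 = r
    rw [Real.sq_sqrt hr'.le]
    field_simp

lemma hasDeriv (c : ℝ) : ∀ x ∈ Ioi (0:ℝ),
    HasDerivWithinAt (fun x : ℝ => c * x ^ 2) (2 * c * x) (Ioi 0) x := by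
  intro x _
  have := ((hasDerivAt_pow 2 x).const_mul c).hasDerivWithinAt (s := Ioi 0)
  refine this.congr_deriv ?_
  norm_num
  ring

lemma injOn (c : ℝ) (hc : c ≠ 0) : InjOn (fun x : ℝ => c * x ^ 2) (Ioi 0) := by
  intro x hx y hy h
  simp only [mem_Ioi] at hx hy
  have h2 : x ^ 2 = y ^ 2 := mul_left_cancel₀ hc h
  nlinarith

lemma cov {E : Type*} [NormedAddCommGroup E] [NormedSpace ℝ E] {c : ℝ} (hc : c ≠ 0) (h : ℝ → E) :
    ∫ r in {r : ℝ | 0 < r / c}, h r = ∫ x in Ioi 0, |2 * c * x| • h (c * x ^ 2) := by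
  rw [← image_eq hc]
  exact integral_image_eq_integral_abs_deriv_smul measurableSet_Ioi (hasDeriv c) (injOn c hc) h

lemma cov_int {E : Type*} [NormedAddCommGroup E] [NormedSpace ℝ E] {c : ℝ} (hc : c ≠ 0) (h : ℝ → E) :
    IntegrableOn h {r : ℝ | 0 < r / c} ↔
      IntegrableOn (fun x => |2 * c * x| • h (c * x ^ 2)) (Ioi 0) := by
  rw [← image_eq hc]
  exact integrableOn_image_iff_integrableOn_abs_deriv_smul measurableSet_Ioi (hasDeriv c)
    (injOn c hc) h

lemma tfd_comp {c : ℝ} (hc : c ≠ 0) (φ : SchwartzMap ℝ ℂ) {x : ℝ} (hx : 0 < x) :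
    tfd c φ (c * x ^ 2) = (φ x + φ (-x)) / ((2 * |c| * x : ℝ) : ℂ) := by
  have h1 : c * x ^ 2 / c = x ^ 2 := by field_simp
  have h2 : (0:ℝ) < c * x ^ 2 / c := by rw [h1]; positivity
  rw [tfd, if_pos h2, h1, Real.sqrt_sq hx.le]




lemma key {c : ℝ} (φ : SchwartzMap ℝ ℂ) (hc : c ≠ 0) (g : ℝ → ℂ) (hg : Measurable g)
    (hb : ∃ C : ℝ, ∀ r, ‖g r‖ ≤ C) :
    ∫ x : ℝ, φ x * g (c * x ^ 2) = ∫ r : ℝ, tfd c φ r * g r := by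
  have hint : Integrable (fun x : ℝ => φ x * g (c * x ^ 2)) := by
    simp_rw [mul_comm]
    refine Integrable.bdd_mul (c := hb.choose) φ.integrable ?_ ?_
    · exact (hg.comp ((measurable_id.pow_const 2).const_mul c)).aestronglyMeasurable
    · exact ae_of_all _ (fun x => hb.choose_spec _)
  have hsplit : ∫ x : ℝ, φ x * g (c * x ^ 2) =
      (∫ x in Ioi (0:ℝ), φ x * g (c * x ^ 2)) + ∫ x in Iic (0:ℝ), φ x * g (c * x ^ 2) := by
    rw [← compl_Ioi, integral_add_compl measurableSet_Ioi hint]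
  have hrefl : ∫ x in Iic (0:ℝ), φ x * g (c * x ^ 2)
      = ∫ x in Ioi (0:ℝ), φ (-x) * g (c * x ^ 2) := by
    have := integral_comp_neg_Ioi (0:ℝ) (fun x => φ x * g (c * x ^ 2))
    rw [neg_zero] at this
    rw [← this]
    refine setIntegral_congr_fun measurableSet_Ioi (fun x _ => ?_)
    simp [neg_sq]
  have hcombine : (∫ x in Ioi (0:ℝ), φ x * g (c * x ^ 2)) +
      ∫ x in Ioi (0:ℝ), φ (-x) * g (c * x ^ 2)
      = ∫ x in Ioi (0:ℝ), (φ x + φ (-x)) * g (c * x ^ 2) := by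
    rw [← integral_add hint.integrableOn]
    · simp_rw [add_mul]
    · have : Integrable (fun x : ℝ => φ (-x) * g (c * (-x) ^ 2)) := hint.comp_neg
      simp_rw [neg_sq] at this
      exact this.integrableOn
  have hpt : ∫ x in Ioi (0:ℝ), (φ x + φ (-x)) * g (c * x ^ 2)
      = ∫ x in Ioi (0:ℝ), |2 * c * x| • (tfd c φ (c * x ^ 2) * g (c * x ^ 2)) := by
    refine setIntegral_congr_fun measurableSet_Ioi (fun x hx => ?_)
    have hx : (0:ℝ) < x := hx
    rw [tfd_comp hc φ hx]
    have habs : |2 * c * x| = 2 * |c| * x := by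
      rw [abs_mul, abs_mul, abs_of_pos hx, abs_two]
    rw [habs, Complex.real_smul]
    have hne : (2 * |c| * x : ℝ) ≠ 0 := by positivity
    have hne' : ((2 * |c| * x : ℝ) : ℂ) ≠ 0 := by exact_mod_cast hne
    push_cast at hne' ⊢
    have hcx : ((|c|:ℝ):ℂ) * (x:ℂ) ≠ 0 :=
      mul_ne_zero (by exact_mod_cast (abs_pos.2 hc).ne') (by exact_mod_cast hx.ne')
    field_simp
    rw [eq_div_iff hcx]; ring
  have hext : ∫ r in {r : ℝ | 0 < r / c}, tfd c φ r * g r = ∫ r : ℝ, tfd c φ r * g r := by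
    refine setIntegral_eq_integral_of_forall_compl_eq_zero (fun r hr => ?_)
    have : ¬ 0 < r / c := hr
    rw [tfd, if_neg this, zero_mul]
  rw [hsplit, hrefl, hcombine, hpt, ← cov hc (fun r => tfd c φ r * g r), hext]


-- The side function G
noncomputable def Gf (c : ℝ) (φ : SchwartzMap ℝ ℂ) (x : ℝ) : ℝ :=
  ‖φ x + φ (-x)‖ ^ 2 / (2 * |c| * x)

lemma Gf_meas (c : ℝ) (φ : SchwartzMap ℝ ℂ) : Measurable (Gf c φ) := by
  unfold Gf
  have h1 : Continuous fun x : ℝ => ‖φ x + φ (-x)‖ ^ 2 :=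
    ((φ.continuous.add (φ.continuous.comp continuous_neg)).norm.pow 2)
  exact h1.measurable.div ((measurable_id.const_mul (2 * |c|)))

-- Backward: φ 0 = 0 ⇒ integrable
lemma Gf_integrable {c : ℝ} (hc : c ≠ 0) (φ : SchwartzMap ℝ ℂ) (h0 : φ 0 = 0) :
    IntegrableOn (Gf c φ) (Ioi 0) := by
  obtain ⟨C1, hC1pos, hC1⟩ := (SchwartzMap.derivCLM ℝ ℂ φ).decay 0 0
  obtain ⟨C2, hC2pos, hC2⟩ := φ.decay 2 0
  have hC1' : ∀ y : ℝ, ‖deriv (⇑φ) y‖ ≤ C1 := by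
    intro y
    have := hC1 y
    simpa [norm_iteratedFDeriv_zero, SchwartzMap.derivCLM_apply] using this
  have hlip : ∀ x : ℝ, ‖φ x‖ ≤ C1 * |x| := by
    intro x
    have := convex_univ.norm_image_sub_le_of_norm_hasDerivWithin_le
      (f := ⇑φ) (f' := deriv (⇑φ)) (s := univ)
      (fun y _ => (φ.differentiable.differentiableAt).hasDerivAt.hasDerivWithinAt)
      (fun y _ => hC1' y) (mem_univ 0) (mem_univ x)
    simpa [h0, Real.norm_eq_abs] using this
  have hdecay : ∀ x : ℝ, x ^ 2 * ‖φ x‖ ≤ C2 := by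
    intro x
    have := hC2 x
    simpa [norm_iteratedFDeriv_zero, Real.norm_eq_abs, sq_abs] using this
  set D := max C1 C2 with hD
  have hDpos : 0 < D := lt_of_lt_of_le hC1pos (le_max_left _ _)
  have hcpos : 0 < |c| := abs_pos.2 hc
  set K := 8 * D ^ 2 / (2 * |c|) with hK
  have hbound : ∀ x ∈ Ioi (0:ℝ), ‖Gf c φ x‖ ≤ K * (1 + x ^ 2)⁻¹ := by
    intro x hx
    have hx : (0:ℝ) < x := hx
    set N := ‖φ x + φ (-x)‖ with hN
    have hNnn : 0 ≤ N := norm_nonneg _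
    have hGnn : 0 ≤ Gf c φ x := by
      unfold Gf; positivity
    rw [Real.norm_of_nonneg hGnn]
    have key : N ^ 2 * (1 + x ^ 2) ≤ 8 * D ^ 2 * x := by
      rcases le_total x 1 with hx1 | hx1
      · have hb1 : N ≤ 2 * D * x := by
          calc N ≤ ‖φ x‖ + ‖φ (-x)‖ := norm_add_le _ _
          _ ≤ C1 * |x| + C1 * |(-x)| := add_le_add (hlip x) (hlip (-x))
          _ = 2 * C1 * x := by rw [abs_neg, abs_of_pos hx]; ring
          _ ≤ 2 * D * x := by nlinarith [le_max_left C1 C2]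
        have hsq : N ^ 2 ≤ 4 * D ^ 2 * x ^ 2 := by
          nlinarith [mul_le_mul hb1 hb1 hNnn (by positivity : (0:ℝ) ≤ 2 * D * x)]
        have hx2 : x ^ 2 ≤ x := by nlinarith
        have hx4 : x ^ 4 ≤ x := by
          calc x ^ 4 ≤ x ^ 1 := pow_le_pow_of_le_one hx.le hx1 (by norm_num)
          _ = x := pow_one x
        have h1 : N ^ 2 * (1 + x ^ 2) ≤ 4 * D ^ 2 * x ^ 2 * (1 + x ^ 2) :=
          mul_le_mul_of_nonneg_right hsq (by positivity)
        nlinarith [mul_le_mul_of_nonneg_left hx2 (by positivity : (0:ℝ) ≤ 4 * D ^ 2),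
          mul_le_mul_of_nonneg_left hx4 (by positivity : (0:ℝ) ≤ 4 * D ^ 2), h1]
      · have hb2 : N * x ^ 2 ≤ 2 * D := by
          calc N * x ^ 2 ≤ (‖φ x‖ + ‖φ (-x)‖) * x ^ 2 := by
                exact mul_le_mul_of_nonneg_right (norm_add_le _ _) (by positivity)
          _ = x ^ 2 * ‖φ x‖ + (-x) ^ 2 * ‖φ (-x)‖ := by ring_nf
          _ ≤ C2 + C2 := add_le_add (hdecay x) (hdecay (-x))
          _ ≤ 2 * D := by nlinarith [le_max_right C1 C2]
        have hsq2 : N ^ 2 * x ^ 4 ≤ 4 * D ^ 2 := by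
          nlinarith [mul_le_mul hb2 hb2 (by positivity : (0:ℝ) ≤ N * x ^ 2)
            (by positivity : (0:ℝ) ≤ 2 * D)]
        have hx2 : (1:ℝ) ≤ x ^ 2 := by nlinarith
        have hx3 : (1:ℝ) ≤ x ^ 3 := by nlinarith
        have hA : 0 ≤ N ^ 2 * x ^ 2 * (x ^ 2 - 1) :=
          mul_nonneg (mul_nonneg (sq_nonneg N) (sq_nonneg x)) (by linarith)
        have hB : 8 * D ^ 2 ≤ 8 * D ^ 2 * x ^ 3 := by
          nlinarith [mul_nonneg (by positivity : (0:ℝ) ≤ 8 * D ^ 2) (by linarith : (0:ℝ) ≤ x ^ 3 - 1)]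
        have hfinal : N ^ 2 * (1 + x ^ 2) * x ^ 2 ≤ 8 * D ^ 2 * x * x ^ 2 := by nlinarith [hA, hsq2, hB]
        exact le_of_mul_le_mul_right hfinal (by positivity)
    have h2cx : 0 < 2 * |c| * x := by positivity
    have hgoal : Gf c φ x ≤ 8 * D ^ 2 / (2 * |c| * (1 + x ^ 2)) := by
      rw [Gf, div_le_div_iff₀ h2cx (by positivity)]
      nlinarith [key, hcpos]
    calc Gf c φ x ≤ 8 * D ^ 2 / (2 * |c| * (1 + x ^ 2)) := hgoal
    _ = K * (1 + x ^ 2)⁻¹ := by rw [hK]; field_simp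
  refine Integrable.mono' ((integrable_inv_one_add_sq.const_mul K).integrableOn)
    ((Gf_meas c φ).aestronglyMeasurable) ?_
  rw [ae_restrict_iff' measurableSet_Ioi]
  exact ae_of_all _ hbound

lemma Gf_not_integrable {c : ℝ} (hc : c ≠ 0) (φ : SchwartzMap ℝ ℂ)
    (hG : IntegrableOn (Gf c φ) (Ioi 0)) : φ 0 = 0 := by
  by_contra hphi
  have hpos : 0 < ‖φ 0‖ := norm_pos_iff.2 hphi
  have hcpos : 0 < |c| := abs_pos.2 hc
  have hFc : Continuous fun x : ℝ => ‖φ x + φ (-x)‖ :=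
    (φ.continuous.add (φ.continuous.comp continuous_neg)).norm
  have hF0 : ‖φ (0:ℝ) + φ (-(0:ℝ))‖ = 2 * ‖φ 0‖ := by
    rw [neg_zero]
    rw [show φ (0:ℝ) + φ (0:ℝ) = (2:ℂ) * φ 0 by ring]
    rw [norm_mul]
    simp
  have hev : ∀ᶠ x in nhds (0:ℝ), ‖φ 0‖ < ‖φ x + φ (-x)‖ := by
    have ht : Filter.Tendsto (fun x : ℝ => ‖φ x + φ (-x)‖) (nhds 0) (nhds (2 * ‖φ 0‖)) := by
      have := hFc.continuousAt (x := (0:ℝ))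
      rwa [ContinuousAt, hF0] at this
    exact ht.eventually (eventually_gt_nhds (by linarith))
  obtain ⟨δ, hδpos, hδ⟩ := Metric.eventually_nhds_iff.1 hev
  set b := δ / 2 with hb
  have hbpos : 0 < b := by positivity
  have hmaj : ∀ x ∈ Ioc (0:ℝ) b, ‖x⁻¹‖ ≤ (2 * |c| / ‖φ 0‖ ^ 2) * Gf c φ x := by
    intro x hx
    obtain ⟨hx0, hxb⟩ := hx
    have hxδ : dist x 0 < δ := by
      rw [Real.dist_eq, sub_zero, abs_of_pos hx0]; linarith
    have hFx : ‖φ 0‖ < ‖φ x + φ (-x)‖ := hδ hxδ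
    have h1 : ‖φ 0‖ ^ 2 / (2 * |c| * x) ≤ Gf c φ x := by
      rw [Gf]
      apply div_le_div_of_nonneg_right ?_ (by positivity)
      · nlinarith [hpos, norm_nonneg (φ x + φ (-x))]
    rw [Real.norm_eq_abs, abs_of_pos (inv_pos.2 hx0)]
    have hne1 : ‖φ 0‖ ≠ 0 := hpos.ne'
    have hne2 : |c| ≠ 0 := hcpos.ne'
    have hne3 : x ≠ 0 := hx0.ne'
    calc x⁻¹ = (2 * |c| / ‖φ 0‖ ^ 2) * (‖φ 0‖ ^ 2 / (2 * |c| * x)) := by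
          field_simp
    _ ≤ (2 * |c| / ‖φ 0‖ ^ 2) * Gf c φ x := by
          exact mul_le_mul_of_nonneg_left h1 (by positivity)
  have hGm : IntegrableOn (fun x => (2 * |c| / ‖φ 0‖ ^ 2) * Gf c φ x) (Ioi 0) :=
    hG.const_mul _
  have hint : IntegrableOn (fun x : ℝ => x⁻¹) (Ioc 0 b) := by
    refine Integrable.mono' (hGm.mono_set Ioc_subset_Ioi_self)
      measurable_inv.aestronglyMeasurable ?_
    rw [ae_restrict_iff' measurableSet_Ioc]
    exact ae_of_all _ hmaj
  have hII : IntervalIntegrable (fun x : ℝ => x⁻¹) volume 0 b :=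
    (intervalIntegrable_iff_integrableOn_Ioc_of_le hbpos.le).2 hint
  rcases intervalIntegrable_inv_iff.1 hII with h | h
  · exact absurd h hbpos.ne
  · exact h (left_mem_uIcc)


variable {c : ℝ} (φ : SchwartzMap ℝ ℂ)

lemma habs2 {x : ℝ} (hx : 0 < x) : |2 * c * x| = 2 * |c| * x := by
  rw [abs_mul, abs_mul, abs_of_pos hx, abs_two]

lemma tfd_integrable (hc : c ≠ 0) : Integrable (tfd c φ) := by
  have hsupp : Function.support (tfd c φ) ⊆ {r : ℝ | 0 < r / c} := by
    intro r hr
    by_contra h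
    simp only [mem_setOf_eq] at h
    exact hr (by rw [tfd, if_neg h])
  rw [← indicator_eq_self.mpr hsupp, integrable_indicator_iff (measS c)]
  rw [cov_int hc]
  rw [integrableOn_congr_fun (g := fun x : ℝ => φ x + φ (-x)) ?_ measurableSet_Ioi]
  · exact (φ.integrable.add φ.integrable.comp_neg).integrableOn
  · intro x hx
    have hx : (0:ℝ) < x := hx
    have hne : (2 * |c| * x : ℝ) ≠ 0 := by positivity
    have hne' : ((2 * |c| * x : ℝ) : ℂ) ≠ 0 := by exact_mod_cast hne
    simp only [tfd_comp hc φ hx, habs2 hx, Complex.real_smul]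
    push_cast at hne' ⊢
    have hcx : ((|c|:ℝ):ℂ) * (x:ℂ) ≠ 0 :=
      mul_ne_zero (by exact_mod_cast (abs_pos.2 hc).ne') (by exact_mod_cast hx.ne')
    field_simp
    rw [div_eq_iff hcx]; ring

lemma memL2_iff (hc : c ≠ 0) : MemLp (tfd c φ) 2 volume ↔ φ 0 = 0 := by
  rw [memLp_two_iff_integrable_sq_norm (measurable_tfd c φ).aestronglyMeasurable]
  have hsupp : Function.support (fun r => ‖tfd c φ r‖ ^ 2) ⊆ {r : ℝ | 0 < r / c} := by
    intro r hr
    by_contra h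
    simp only [mem_setOf_eq] at h
    refine hr ?_
    show ‖tfd c φ r‖ ^ 2 = 0
    rw [tfd, if_neg h]
    simp
  have step : Integrable (fun r => ‖tfd c φ r‖ ^ 2) ↔ IntegrableOn (Gf c φ) (Ioi 0) := by
    rw [← indicator_eq_self.mpr hsupp, integrable_indicator_iff (measS c)]
    rw [cov_int hc]
    refine integrableOn_congr_fun ?_ measurableSet_Ioi
    intro x hx
    have hx : (0:ℝ) < x := hx
    have hne : (2 * |c| * x : ℝ) ≠ 0 := by positivity
    simp only [tfd_comp hc φ hx, habs2 hx, smul_eq_mul, Gf]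
    rw [norm_div]
    have : ‖((2 * |c| * x : ℝ) : ℂ)‖ = 2 * |c| * x := by
      rw [Complex.norm_real, Real.norm_eq_abs, abs_of_pos (by positivity)]
    rw [this, div_pow]
    field_simp
  rw [step]
  exact ⟨Gf_not_integrable hc φ, Gf_integrable hc φ⟩

lemma unique (hc : c ≠ 0) (ft : ℝ → ℂ) (hftm : Measurable ft)
    (hid : ∀ g : ℝ → ℂ, Measurable g → (∃ C : ℝ, ∀ r, ‖g r‖ ≤ C) →
      ∫ x : ℝ, φ x * g (c * x ^ 2) = ∫ r : ℝ, ft r * g r) :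
    ft =ᵐ[volume] tfd c φ := by
  have hseteq : ∀ s : Set ℝ, MeasurableSet s →
      ∫ r in s, ft r = ∫ r in s, tfd c φ r := by
    intro s hs
    have hg : Measurable (s.indicator (fun _ => (1:ℂ))) :=
      measurable_const.indicator hs
    have hb : ∃ C : ℝ, ∀ r, ‖s.indicator (fun _ => (1:ℂ)) r‖ ≤ C := by
      refine ⟨1, fun r => ?_⟩
      by_cases h : r ∈ s <;> simp [indicator_apply, h]
    have h1 := (hid _ hg hb).symm.trans (key φ hc _ hg hb)
    have e1 : ∀ (f : ℝ → ℂ), (fun r => f r * s.indicator (fun _ => (1:ℂ)) r)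
        = s.indicator f := by
      intro f
      ext r
      by_cases h : r ∈ s <;> simp [indicator_apply, h]
    rw [e1 ft, e1 (tfd c φ), integral_indicator hs, integral_indicator hs] at h1
    exact h1
  set B : ℕ → Set ℝ := fun n => {r | ‖ft r‖ ≤ n} ∩ Ioo (-(n:ℝ)) n with hB
  have hBmeas : ∀ n, MeasurableSet (B n) := fun n =>
    (measurableSet_le hftm.norm measurable_const).inter measurableSet_Ioo
  have hfin : ∀ n, IsFiniteMeasure (volume.restrict (B n)) := by
    intro n
    constructor
    rw [Measure.restrict_apply_univ]
    exact lt_of_le_of_lt (measure_mono inter_subset_right) measure_Ioo_lt_top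
  have hae : ∀ n : ℕ, ft =ᵐ[volume.restrict (B n)] tfd c φ := by
    intro n
    haveI := hfin n
    refine ae_eq_of_forall_setIntegral_eq_of_sigmaFinite ?_ ?_ ?_
    · intro s hs _
      refine (Integrable.mono' (integrable_const (n:ℝ)) hftm.aestronglyMeasurable
        ?_).integrableOn
      rw [ae_restrict_iff' (hBmeas n)]
      exact ae_of_all _ (fun r hr => hr.1)
    · intro s hs _
      exact ((tfd_integrable φ hc).restrict.restrict)
    · intro s hs _
      rw [Measure.restrict_restrict hs]
      exact hseteq (s ∩ B n) (hs.inter (hBmeas n))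
  have hall : ∀ᵐ r : ℝ, ∀ n : ℕ, r ∈ B n → ft r = tfd c φ r :=
    ae_all_iff.2 fun n => ae_imp_of_ae_restrict (hae n)
  filter_upwards [hall] with r hr
  obtain ⟨n, hn⟩ := exists_nat_gt (max ‖ft r‖ |r|)
  have h1 : ‖ft r‖ ≤ n := le_of_lt (lt_of_le_of_lt (le_max_left _ _) hn)
  have h2 : |r| < n := lt_of_le_of_lt (le_max_right _ _) hn
  rw [abs_lt] at h2
  exact hr n ⟨h1, h2.1, h2.2⟩


end FiberAux

/-- For `q(x) = c·x²` on `ℝ` (`c ≠ 0`), every Schwartz function `φ` admits a fiber density along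
`q`, and any such fiber density is square-integrable if and only if `φ(0) = 0`. -/
theorem fiber_density_dim_one_memL2_iff
    (c : ℝ) (hc : c ≠ 0) (q : ℝ → ℝ) (hqdef : ∀ x, q x = c * x ^ 2)
    (φ : SchwartzMap ℝ ℂ) :
    (∃ ft : ℝ → ℂ, IsFiberDensity1 q (⇑φ) ft) ∧
      ∀ ft : ℝ → ℂ, IsFiberDensity1 q (⇑φ) ft → (MemLp ft 2 volume ↔ φ 0 = 0) := by
  constructor
  · refine ⟨FiberAux.tfd c φ, FiberAux.measurable_tfd c φ, fun g hg hb => ?_⟩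
    simp only [hqdef]
    exact FiberAux.key φ hc g hg hb
  · rintro ft ⟨hftm, hid⟩
    have hid' : ∀ g : ℝ → ℂ, Measurable g → (∃ C : ℝ, ∀ r, ‖g r‖ ≤ C) →
        ∫ x : ℝ, φ x * g (c * x ^ 2) = ∫ r : ℝ, ft r * g r := by
      intro g hg hb
      simpa only [hqdef] using hid g hg hb
    have hae := FiberAux.unique φ hc ft hftm hid'
    constructor
    · intro h
      exact (FiberAux.memL2_iff φ hc).1 (h.ae_eq hae)
    · intro h0
      exact ((FiberAux.memL2_iff φ hc).2 h0).ae_eq hae.symm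
end

section
/- Let s ∈ ℂ with Re(s) > 0 and let t ∈ ℝ. Then the function a ↦ |a|^{it} · ((1+a²)(1+a^{-2}))^{-s/2} · |a|^{-1} is absolutely integrable on ℝ \ {0} with respect to Lebesgue measure, and ∫_{ℝ \ {0}} |a|^{it} ((1+a²)(1+a^{-2}))^{-s/2} |a|^{-1} da = Γ((s+it)/2) · Γ((s−it)/2) / Γ(s), where Γ is the complex Gamma function and, for u > 0 and z ∈ ℂ, u^z = exp(z·log u). -/
open MeasureTheory

open Set Real


private lemma cpow_pos_eq {r : ℝ} (hr : 0 < r) (z : ℂ) :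
    (r : ℂ) ^ z = Complex.exp (z * Real.log r) := by
  rw [Complex.cpow_def_of_ne_zero (Complex.ofReal_ne_zero.mpr hr.ne') z,
    ← Complex.ofReal_log hr.le, mul_comm]

private lemma beta_Ioi (w w' : ℂ) (hw : 0 < w.re) (hw' : 0 < w'.re) :
    IntegrableOn (fun u : ℝ => (u:ℂ)^(w-1) * (((1+u:ℝ)):ℂ)^(-(w+w'))) (Ioi (0:ℝ)) volume ∧
    ∫ u in Ioi (0:ℝ), (u:ℂ)^(w-1) * (((1+u:ℝ)):ℂ)^(-(w+w')) = Complex.betaIntegral w w' := by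
  set φ : ℝ → ℝ := fun x => x / (1 - x) with hφ
  have hderiv : ∀ x ∈ Ioo (0:ℝ) 1, HasDerivWithinAt φ ((1-x)⁻¹^2) (Ioo (0:ℝ) 1) x := by
    intro x hx
    have h1 : (1:ℝ) - x ≠ 0 := by simp only [mem_Ioo] at hx; intro h; nlinarith [hx.2]
    have := (hasDerivAt_id x).div ((hasDerivAt_id x).const_sub 1) h1
    simp only [one_mul, id] at this
    refine this.hasDerivWithinAt.congr_deriv ?_
    rw [div_eq_mul_inv, inv_pow]; ring
  have hinj : InjOn φ (Ioo (0:ℝ) 1) := by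
    intro x hx y hy hxy
    simp only [mem_Ioo] at hx hy
    have h1 : (1:ℝ) - x ≠ 0 := by intro h; nlinarith [hx.2]
    have h2 : (1:ℝ) - y ≠ 0 := by intro h; nlinarith [hy.2]
    simp only [hφ] at hxy
    field_simp at hxy
    linear_combination hxy
  have himg : φ '' Ioo (0:ℝ) 1 = Ioi (0:ℝ) := by
    ext u
    constructor
    · rintro ⟨x, hx, rfl⟩
      simp only [mem_Ioo] at hx
      exact div_pos hx.1 (by linarith [hx.2])
    · intro hu
      simp only [mem_Ioi] at hu
      refine ⟨u / (1 + u), ⟨div_pos hu (by linarith), ?_⟩, ?_⟩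
      · rw [div_lt_one (by linarith)]; linarith
      · simp only [hφ]
        rw [div_eq_iff]
        · field_simp; ring
        · intro h
          have : (1:ℝ) - u/(1+u) = 1/(1+u) := by field_simp; ring
          rw [this] at h
          simp at h
          linarith
  have hkey : ∀ x ∈ Ioo (0:ℝ) 1,
      |(1-x)⁻¹^2| • ((((φ x : ℝ)):ℂ)^(w-1) * (((1 + φ x : ℝ)):ℂ)^(-(w+w')))
        = (x:ℂ)^(w-1) * (((1-x : ℝ)):ℂ)^(w'-1) := by
    intro x hx
    obtain ⟨hx0, hx1⟩ := hx
    have h1x : (0:ℝ) < 1 - x := by linarith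
    have hφx : 0 < φ x := div_pos hx0 h1x
    have hone : (1:ℝ) + φ x = (1-x)⁻¹ := by simp only [hφ]; field_simp; ring
    have hlogφ : Real.log (φ x) = Real.log x - Real.log (1-x) :=
      Real.log_div hx0.ne' h1x.ne'
    have h2 : ((1-x)⁻¹^2 : ℝ) = Real.exp ((2:ℕ) * Real.log (1-x)⁻¹) := by
      rw [← Real.log_pow, Real.exp_log (by positivity)]
    rw [cpow_pos_eq hφx, hone, cpow_pos_eq (by positivity : (0:ℝ) < (1-x)⁻¹),
      cpow_pos_eq hx0, cpow_pos_eq h1x, hlogφ,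
      abs_of_nonneg (by positivity : (0:ℝ) ≤ (1-x)⁻¹^2), h2,
      Complex.real_smul, Complex.ofReal_exp, ← Complex.exp_add, ← Complex.exp_add, ← Complex.exp_add]
    congr 1
    push_cast [Real.log_inv]
    ring
  have hint0 : IntegrableOn (fun x : ℝ => (x:ℂ)^(w-1) * (((1-x : ℝ)):ℂ)^(w'-1))
      (Ioo (0:ℝ) 1) volume := by
    have h := (intervalIntegrable_iff_integrableOn_Ioc_of_le zero_le_one).1
      (Complex.betaIntegral_convergent hw hw')
    refine ((h.mono_set Ioo_subset_Ioc_self).congr_fun ?_ measurableSet_Ioo)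
    intro x hx
    push_cast
    ring
  have hintIoi : IntegrableOn (fun u : ℝ => (u:ℂ)^(w-1) * (((1+u:ℝ)):ℂ)^(-(w+w')))
      (Ioi (0:ℝ)) volume := by
    rw [← himg, integrableOn_image_iff_integrableOn_abs_deriv_smul measurableSet_Ioo hderiv hinj]
    exact hint0.congr_fun (fun x hx => (hkey x hx).symm) measurableSet_Ioo
  refine ⟨hintIoi, ?_⟩
  have hmeq := integral_image_eq_integral_abs_deriv_smul measurableSet_Ioo hderiv hinj
    (fun u : ℝ => (u:ℂ)^(w-1) * (((1+u:ℝ)):ℂ)^(-(w+w')))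
  rw [himg] at hmeq
  rw [hmeq, setIntegral_congr_fun measurableSet_Ioo hkey, Complex.betaIntegral,
    intervalIntegral.integral_of_le zero_le_one, integral_Ioc_eq_integral_Ioo]
  refine setIntegral_congr_fun measurableSet_Ioo fun x hx => ?_
  push_cast
  ring

private lemma step_Ioi (s : ℂ) (hs : 0 < s.re) (t : ℝ) :
    IntegrableOn (fun a : ℝ => ((|a| : ℝ) : ℂ)^(s + Complex.I*t - 1)
        * (((1+a^2 : ℝ)):ℂ)^(-s)) (Ioi (0:ℝ)) volume ∧
    ∫ a in Ioi (0:ℝ), ((|a| : ℝ) : ℂ)^(s + Complex.I*t - 1) * (((1+a^2 : ℝ)):ℂ)^(-s)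
      = (2:ℂ)⁻¹ * Complex.betaIntegral ((s + Complex.I*t)/2) ((s - Complex.I*t)/2) := by
  set w : ℂ := (s + Complex.I*t)/2 with hw_def
  set w' : ℂ := (s - Complex.I*t)/2 with hw'_def
  have hwre : w.re = s.re / 2 := by
    simp [hw_def, Complex.add_re, Complex.div_re, Complex.normSq, Complex.mul_re]
  have hw're : w'.re = s.re / 2 := by
    simp [hw'_def, Complex.sub_re, Complex.div_re, Complex.normSq, Complex.mul_re]
  have hw : 0 < w.re := by rw [hwre]; linarith
  have hw' : 0 < w'.re := by rw [hw're]; linarith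
  have hww : w + w' = s := by rw [hw_def, hw'_def]; ring
  obtain ⟨hbint, hbeq⟩ := beta_Ioi w w' hw hw'
  rw [hww] at hbint hbeq
  set g : ℝ → ℂ := fun u => (2:ℂ)⁻¹ * ((u:ℂ)^(w-1) * (((1+u:ℝ)):ℂ)^(-s)) with hg
  have hkey : ∀ a ∈ Ioi (0:ℝ),
      (|(2:ℝ)| * a ^ ((2:ℝ) - 1)) • g (a ^ (2:ℝ))
        = ((|a| : ℝ) : ℂ)^(s + Complex.I*t - 1) * (((1+a^2 : ℝ)):ℂ)^(-s) := by
    intro a ha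
    have ha : (0:ℝ) < a := ha
    have h21 : ((2:ℝ) - 1) = (1:ℝ) := by norm_num
    have hsq : a ^ (2:ℝ) = a ^ 2 := by
      rw [show (2:ℝ) = ((2:ℕ):ℝ) by norm_num, Real.rpow_natCast]
    have hlogsq : Real.log (a ^ 2) = 2 * Real.log a := Real.log_pow a 2
    have hconv : (a : ℂ) = Complex.exp (Real.log a) := by
      rw [← Complex.ofReal_exp, Real.exp_log ha]
    rw [hsq, h21, Real.rpow_one, abs_of_pos ha, hg]
    simp only []
    rw [cpow_pos_eq (by positivity : (0:ℝ) < a ^ 2), hlogsq,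
      cpow_pos_eq ha, Complex.real_smul]
    rw [show ((|(2:ℝ)| * a : ℝ) : ℂ) = 2 * Complex.exp (Real.log a) by
      push_cast [abs_of_pos (by norm_num : (0:ℝ) < 2)]
      rw [← Complex.ofReal_exp, Real.exp_log ha]]
    rw [show (2:ℂ) * Complex.exp (↑(Real.log a)) * ((2:ℂ)⁻¹
        * (Complex.exp ((w - 1) * ↑(2 * Real.log a)) * (((1+a^2:ℝ)):ℂ)^(-s)))
      = Complex.exp (↑(Real.log a) + (w - 1) * ↑(2 * Real.log a))
        * (((1+a^2:ℝ)):ℂ)^(-s) by rw [Complex.exp_add]; ring]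
    congr 2
    rw [hw_def]
    push_cast
    ring
  have hiff := integrableOn_Ioi_comp_rpow_iff g (p := (2:ℝ)) two_ne_zero
  have hieq := integral_comp_rpow_Ioi g (p := (2:ℝ)) two_ne_zero
  constructor
  · have : IntegrableOn g (Ioi (0:ℝ)) volume := hbint.const_mul _
    have h2 := hiff.mpr this
    exact (h2.congr_fun hkey measurableSet_Ioi)
  · rw [← setIntegral_congr_fun measurableSet_Ioi hkey, hieq]
    simp only [hg]
    rw [MeasureTheory.integral_const_mul, hbeq]

private lemma pointwise_eq (s : ℂ) (t : ℝ) {a : ℝ} (ha : a ≠ 0) :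
    (((|a| : ℝ) : ℂ) ^ (Complex.I * (t : ℂ))) *
      ((((1 + a ^ 2) * (1 + (a⁻¹) ^ 2) : ℝ) : ℂ) ^ (-(s / 2))) *
      ((|a|⁻¹ : ℝ) : ℂ)
    = ((|a| : ℝ) : ℂ)^(s + Complex.I*t - 1) * (((1+a^2 : ℝ)):ℂ)^(-s) := by
  have ha' : (0:ℝ) < |a| := abs_pos.mpr ha
  have h1 : (0:ℝ) < 1 + a^2 := by positivity
  have hinv : (0:ℝ) < 1 + (a⁻¹)^2 := by positivity
  have hprod : (0:ℝ) < (1 + a^2) * (1 + (a⁻¹)^2) := mul_pos h1 hinv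
  have hlog : Real.log ((1 + a^2) * (1 + (a⁻¹)^2))
      = 2 * Real.log (1 + a^2) - 2 * Real.log |a| := by
    have h2 : 1 + (a⁻¹)^2 = (1 + a^2) / a^2 := by field_simp; ring
    rw [Real.log_mul h1.ne' hinv.ne', h2, Real.log_div h1.ne' (pow_ne_zero 2 ha),
      ← sq_abs, Real.log_pow]
    push_cast
    ring
  have hcast : ((|a|⁻¹ : ℝ) : ℂ) = Complex.exp (-(Real.log |a| : ℂ)) := by
    rw [show |a|⁻¹ = Real.exp (-(Real.log |a|)) by
      rw [Real.exp_neg, Real.exp_log ha'], Complex.ofReal_exp]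
    push_cast
    ring_nf
  rw [cpow_pos_eq ha', cpow_pos_eq hprod, cpow_pos_eq ha', cpow_pos_eq h1,
    hlog, hcast, ← Complex.exp_add, ← Complex.exp_add, ← Complex.exp_add]
  congr 1
  push_cast
  ring

/-- **Evaluation of the archimedean local height integral** (split case `SO(V₀)(ℝ) ≅ ℝˣ`):
for `Re s > 0` and `t ∈ ℝ`,
`∫_{ℝ∖{0}} |a|^{it} ((1+a²)(1+a⁻²))^{-s/2} |a|⁻¹ da = Γ((s+it)/2) Γ((s−it)/2) / Γ(s)`,
the integral being absolutely convergent. -/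
theorem archimedean_height_integral_eval (s : ℂ) (hs : 0 < s.re) (t : ℝ) :
    IntegrableOn
        (fun a : ℝ =>
          (((|a| : ℝ) : ℂ) ^ (Complex.I * (t : ℂ))) *
            ((((1 + a ^ 2) * (1 + (a⁻¹) ^ 2) : ℝ) : ℂ) ^ (-(s / 2))) *
            ((|a|⁻¹ : ℝ) : ℂ))
        ({0}ᶜ : Set ℝ) volume ∧
    (∫ a in ({0}ᶜ : Set ℝ),
        (((|a| : ℝ) : ℂ) ^ (Complex.I * (t : ℂ))) *
          ((((1 + a ^ 2) * (1 + (a⁻¹) ^ 2) : ℝ) : ℂ) ^ (-(s / 2))) *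
          ((|a|⁻¹ : ℝ) : ℂ)) =
      Complex.Gamma ((s + Complex.I * (t : ℂ)) / 2) *
        Complex.Gamma ((s - Complex.I * (t : ℂ)) / 2) / Complex.Gamma s := by
  set F : ℝ → ℂ := fun a =>
    ((|a| : ℝ) : ℂ)^(s + Complex.I*t - 1) * (((1+a^2 : ℝ)):ℂ)^(-s) with hF
  obtain ⟨hIoi, hIoiEq⟩ := step_Ioi s hs t
  have hIoi : IntegrableOn F (Ioi (0:ℝ)) volume := hIoi
  have hFeven : ∀ a : ℝ, F (-a) = F a := by
    intro a; simp only [hF, abs_neg, neg_sq]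
  have m : MeasurableEmbedding (fun x : ℝ => -x) :=
    (Homeomorph.neg ℝ).measurableEmbedding
  have hIic : IntegrableOn F (Iic (0:ℝ)) volume := by
    rw [← Measure.map_neg_eq_self (volume : Measure ℝ), m.integrableOn_map_iff]
    simp_rw [Function.comp_def, hFeven, Set.neg_preimage, Set.neg_Iic, neg_zero]
    exact Iff.mpr integrableOn_Ici_iff_integrableOn_Ioi hIoi
  have hInt : Integrable F volume := by
    have h := hIic.union hIoi
    rwa [Set.Iic_union_Ioi, integrableOn_univ] at h
  have hrestrict : (volume : Measure ℝ).restrict ({0}ᶜ : Set ℝ) = volume := by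
    rw [Measure.restrict_congr_set (t := Set.univ), Measure.restrict_univ]
    rw [MeasureTheory.ae_eq_univ]
    simp
  have hIicEq : ∫ a in Iic (0:ℝ), F a = ∫ a in Ioi (0:ℝ), F a := by
    have h := integral_comp_neg_Ioi (0:ℝ) F
    simp_rw [hFeven, neg_zero] at h
    exact h.symm
  constructor
  · rw [IntegrableOn, hrestrict]
    refine hInt.congr ?_
    have h0 : ∀ᵐ (a : ℝ) ∂volume, a ≠ 0 := by
      refine ae_iff.mpr ?_
      simp
    filter_upwards [h0] with a ha
    exact (pointwise_eq s t ha).symm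
  · rw [setIntegral_congr_fun (measurableSet_singleton (0:ℝ)).compl
      (fun a ha => pointwise_eq s t ha), hrestrict,
      ← setIntegral_univ, ← Set.Iic_union_Ioi (a := (0:ℝ)),
      setIntegral_union (Set.Iic_disjoint_Ioi le_rfl) measurableSet_Ioi hIic hIoi,
      hIicEq, hIoiEq]
    set w : ℂ := (s + Complex.I*t)/2
    set w' : ℂ := (s - Complex.I*t)/2
    have hwre : w.re = s.re / 2 := by
      simp [w, Complex.add_re, Complex.div_re, Complex.normSq, Complex.mul_re]
    have hw're : w'.re = s.re / 2 := by
      simp [w', Complex.sub_re, Complex.div_re, Complex.normSq, Complex.mul_re]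
    have hw : 0 < w.re := by rw [hwre]; linarith
    have hw' : 0 < w'.re := by rw [hw're]; linarith
    have hww : w + w' = s := by simp only [w, w']; ring
    have hGG := Complex.Gamma_mul_Gamma_eq_betaIntegral hw hw'
    rw [hww] at hGG
    rw [eq_div_iff (Complex.Gamma_ne_zero_of_re_pos hs)]
    rw [hGG]
    ring
end
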